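/- If T is a tree that is not a path graph, then the metric dimension of T equals |L(T)| - |K(T)|, where L(T) is the set of leaves of T and K(T) is the set of exterior major nodes of T. -/

import Mathlib

open SimpleGraph


/-- `R` is a resolving set of `G`: every pair of distinct vertices is distinguished by the
graph distance to some vertex of `R`. -/
def IsResolvingSet {V : Type*} (G : SimpleGraph V) (R : Set V) : Prop :=
  ∀ u v : V, u ≠ v → ∃ w ∈ R, G.dist u w ≠ G.dist v w

/-- The metric dimension of `G`: the minimal cardinality of a resolving set. -/
noncomputable def metricDim {V : Type*} [Fintype V] (G : SimpleGraph V) : ℕ :=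
  sInf {n : ℕ | ∃ R : Set V, IsResolvingSet G R ∧ R.ncard = n}

/-- A leaf: a vertex of degree 1. -/
def IsLeafVx {V : Type*} [Fintype V] (G : SimpleGraph V) [DecidableRel G.Adj] (v : V) : Prop :=
  G.degree v = 1

/-- An exterior major node: a vertex of degree at least 3 having a path to a leaf all of whose
internal vertices have degree 2. -/
def IsExtMajor {V : Type*} [Fintype V] (G : SimpleGraph V) [DecidableRel G.Adj] (v : V) : Prop :=
  3 ≤ G.degree v ∧ ∃ (l : V) (p : G.Walk v l), IsLeafVx G l ∧ p.IsPath ∧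
    ∀ u ∈ p.support, u ≠ v → u ≠ l → G.degree u = 2

/-- A path graph: a tree all of whose vertices have degree at most 2. -/
def IsPathGraph {V : Type*} [Fintype V] (G : SimpleGraph V) [DecidableRel G.Adj] : Prop :=
  G.IsTree ∧ ∀ v : V, G.degree v ≤ 2

namespace TreeMD

open SimpleGraph Walk

set_option linter.unusedSectionVars false

variable {V : Type*} [DecidableEq V] {G : SimpleGraph V}

section TreeBasics
variable (hT : G.IsTree)
include hT

lemma path_eq {x y : V} {p q : G.Walk x y} (hp : p.IsPath) (hq : q.IsPath) : p = q :=
  (hT.existsUnique_path x y).unique hp hq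

/-- canonical path -/
noncomputable def pth (x y : V) : G.Walk x y := (hT.existsUnique_path x y).exists.choose

lemma pth_isPath (x y : V) : (pth hT x y).IsPath := (hT.existsUnique_path x y).exists.choose_spec

lemma eq_pth {x y : V} {p : G.Walk x y} (hp : p.IsPath) : p = pth hT x y :=
  path_eq hT hp (pth_isPath hT x y)

lemma length_pth (x y : V) : (pth hT x y).length = G.dist x y := by
  refine le_antisymm ?_ (dist_le _)
  obtain ⟨w, hw⟩ := (hT.isConnected.preconnected x y).exists_walk_length_eq_dist
  have hbp : w.bypass = pth hT x y := eq_pth hT w.bypass_isPath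
  calc (pth hT x y).length = w.bypass.length := by rw [hbp]
    _ ≤ w.length := w.length_bypass_le
    _ = G.dist x y := hw

/-- in a tree, every path realizes the distance -/
lemma isPath_length {x y : V} {p : G.Walk x y} (hp : p.IsPath) : p.length = G.dist x y := by
  rw [eq_pth hT hp]; exact length_pth hT x y

lemma adj_dist {x y : V} (h : G.Adj x y) : G.dist x y = 1 := by
  have hp : (Walk.cons h Walk.nil : G.Walk x y).IsPath := by simp [h.ne]
  simpa using (isPath_length hT hp).symm

lemma dist_eq_zero {x y : V} (h : G.dist x y = 0) : x = y :=
  (hT.isConnected.dist_eq_zero_iff).mp h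

lemma dist_pos_of_ne {x y : V} (h : x ≠ y) : 0 < G.dist x y :=
  hT.isConnected.pos_dist_of_ne h

lemma tri (x y z : V) : G.dist x z ≤ G.dist x y + G.dist y z :=
  hT.isConnected.dist_triangle

/-- SPLIT: distances add along a path -/
lemma split {x y w : V} {p : G.Walk x y} (hp : p.IsPath) (hw : w ∈ p.support) :
    G.dist x w + G.dist w y = G.dist x y := by
  have h1 : (p.takeUntil w hw).length = G.dist x w := isPath_length hT (hp.takeUntil hw)
  have h2 : (p.dropUntil w hw).length = G.dist w y := isPath_length hT (hp.dropUntil hw)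
  have h3 := congrArg Walk.length (p.take_spec hw)
  rw [Walk.length_append, h1, h2] at h3
  rw [h3, isPath_length hT hp]

/-- two paths with supports meeting only at the junction concatenate to a path -/
lemma append_isPath {x y z : V} {p : G.Walk x y} {q : G.Walk y z}
    (hp : p.IsPath) (hq : q.IsPath) (hsep : ∀ w ∈ p.support, w ∈ q.support → w = y) :
    (p.append q).IsPath := by
  rw [isPath_def, Walk.support_append]
  refine List.Nodup.append ((isPath_def _).mp hp) ?_ ?_
  · have := (isPath_def _).mp hq
    rw [q.support_eq_cons] at this
    exact this.of_cons
  · intro a hap haq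
    have haq' : a ∈ q.support := by
      rw [q.support_eq_cons]; exact List.mem_cons_of_mem _ haq
    have hay : a = y := hsep a hap haq'
    have := (isPath_def _).mp hq
    rw [q.support_eq_cons] at this
    exact (List.nodup_cons.mp this).1 (hay ▸ haq)

/-- converse of split: if distances add then w is on the canonical path -/
lemma mem_pth_of_dist {x y w : V} (h : G.dist x w + G.dist w y = G.dist x y) :
    w ∈ (pth hT x y).support := by
  have hsep : ∀ z ∈ (pth hT x w).support, z ∈ (pth hT w y).support → z = w := by
    intro z hzp hzq
    have h1 := split hT (pth_isPath hT x w) hzp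
    have h2 := split hT (pth_isPath hT w y) hzq
    have htri : G.dist x y ≤ G.dist x z + G.dist z y := tri hT x z y
    have hc : G.dist w z = G.dist z w := dist_comm
    have : G.dist z w = 0 := by omega
    exact dist_eq_zero hT this
  have hpa : ((pth hT x w).append (pth hT w y)).IsPath :=
    append_isPath hT (pth_isPath hT x w) (pth_isPath hT w y) hsep
  have := eq_pth hT hpa
  rw [← this]
  rw [Walk.mem_support_append_iff]
  exact Or.inl (Walk.end_mem_support _)

lemma mem_pth_iff_dist {x y w : V} :
    w ∈ (pth hT x y).support ↔ G.dist x w + G.dist w y = G.dist x y :=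
  ⟨split hT (pth_isPath hT x y), mem_pth_of_dist hT⟩

/-- on a path, the distance from the start determines the vertex -/
lemma path_inj {x y w₁ w₂ : V} {p : G.Walk x y} (hp : p.IsPath)
    (h1 : w₁ ∈ p.support) (h2 : w₂ ∈ p.support) (hd : G.dist x w₁ = G.dist x w₂) :
    w₁ = w₂ := by
  have h2' : w₂ ∈ ((p.takeUntil w₁ h1).append (p.dropUntil w₁ h1)).support := by
    rw [p.take_spec h1]; exact h2
  rw [Walk.mem_support_append_iff] at h2'
  rcases h2' with hc | hc
  · have hs := split hT (hp.takeUntil h1) hc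
    have : G.dist w₂ w₁ = 0 := by omega
    exact (dist_eq_zero hT this).symm
  · have hs2 := split hT (hp.dropUntil h1) hc
    have hs1 := split hT hp h1
    have htri : G.dist x y ≤ G.dist x w₂ + G.dist w₂ y := tri hT x w₂ y
    have : G.dist w₁ w₂ = 0 := by omega
    exact dist_eq_zero hT this


lemma pth_reverse (x y : V) : (pth hT x y).reverse = pth hT y x :=
  eq_pth hT (pth_isPath hT x y).reverse

lemma mem_pth_symm {x y w : V} (h : w ∈ (pth hT x y).support) : w ∈ (pth hT y x).support := by
  rw [← pth_reverse hT, Walk.support_reverse, List.mem_reverse]; exact h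

/-- the two sides of an edge -/
lemma side_total {k a : V} (h : G.Adj k a) (x : V) :
    G.dist x a = G.dist x k + 1 ∨ G.dist x k = G.dist x a + 1 := by
  have hka : G.dist k a = 1 := adj_dist hT h
  have hak : G.dist a k = 1 := adj_dist hT h.symm
  have h1 : G.dist x a ≤ G.dist x k + 1 := by
    have := tri hT x k a; omega
  have h2 : G.dist x k ≤ G.dist x a + 1 := by
    have := tri hT x a k; omega
  have hne : G.dist x a ≠ G.dist x k := by
    intro heq
    by_cases hk : k ∈ (pth hT x a).support
    · have := split hT (pth_isPath hT x a) hk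
      omega
    · have hpa : ((pth hT x a).append (Walk.cons h.symm Walk.nil)).IsPath := by
        refine append_isPath hT (pth_isPath hT x a) (by simp [h.ne']) ?_
        intro w hw hw'
        simp only [Walk.support_cons, Walk.support_nil, List.mem_cons,
          List.mem_singleton, List.not_mem_nil, or_false] at hw'
        rcases hw' with hw' | hw'
        · exact hw'
        · exact absurd (hw' ▸ hw) hk
      have hlen := isPath_length hT hpa
      rw [Walk.length_append] at hlen
      simp only [Walk.length_cons, Walk.length_nil] at hlen
      rw [length_pth hT] at hlen
      omega
  omega

lemma side_geo {k a y m : V} (hside : G.dist y a = G.dist y k + 1)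
    (hm : m ∈ (pth hT y k).support) (h : G.Adj k a) : G.dist m a = G.dist m k + 1 := by
  rcases side_total hT h m with h' | h'
  · exact h'
  · have hs := split hT (pth_isPath hT y k) hm
    have htr : G.dist y a ≤ G.dist y m + G.dist m a := tri hT y m a
    omega

lemma cross {k a y y' : V} (h : G.Adj k a) (hy : G.Adj y y')
    (h1 : G.dist y a = G.dist y k + 1) (h2 : G.dist y' k = G.dist y' a + 1) :
    y = k ∧ y' = a := by
  have hka : G.dist k a = 1 := adj_dist hT h
  have hak : G.dist a k = 1 := adj_dist hT h.symm
  have hknot : k ∉ (pth hT a y').support := by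
    intro hk
    have hs := split hT (pth_isPath hT a y') hk
    have hc1 : G.dist a k = G.dist k a := dist_comm
    have hc2 : G.dist a y' = G.dist y' a := dist_comm
    have hc3 : G.dist k y' = G.dist y' k := dist_comm
    omega
  have hconsp : (Walk.cons h (pth hT a y')).IsPath := by
    rw [Walk.cons_isPath_iff]; exact ⟨pth_isPath hT a y', hknot⟩
  have hsep : ∀ w ∈ (pth hT y k).support, w ∈ (Walk.cons h (pth hT a y')).support → w = k := by
    intro w hw hw'
    simp only [Walk.support_cons, List.mem_cons] at hw'
    rcases hw' with hw' | hw'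
    · exact hw'
    · exfalso
      have hwk : G.dist w a = G.dist w k + 1 := side_geo hT h1 hw h
      have hw2 : w ∈ (pth hT y' a).support := mem_pth_symm hT hw'
      have hwa : G.dist w k = G.dist w a + 1 := side_geo hT h2 hw2 h.symm
      omega
  have hQ : ((pth hT y k).append (Walk.cons h (pth hT a y'))).IsPath :=
    append_isPath hT (pth_isPath hT y k) hconsp hsep
  have hlenQ := isPath_length hT hQ
  rw [Walk.length_append, Walk.length_cons, length_pth hT, length_pth hT] at hlenQ
  have hedge : (Walk.cons hy Walk.nil : G.Walk y y').IsPath := by simp [hy.ne]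
  have hlen1 := isPath_length hT hedge
  simp only [Walk.length_cons, Walk.length_nil] at hlen1
  have hyk : G.dist y k = 0 := by omega
  have hay' : G.dist a y' = 0 := by omega
  exact ⟨dist_eq_zero hT hyk, (dist_eq_zero hT hay').symm⟩

lemma edge_gate_aux {k a : V} (h : G.Adj k a) {x z : V} (q : G.Walk x z)
    (hx : G.dist x a = G.dist x k + 1) (hz : G.dist z k = G.dist z a + 1) :
    G.dist x k + 1 + G.dist a z ≤ q.length := by
  induction q with
  | nil => omega
  | @cons x b z hadj q' ih =>
    rcases side_total hT h b with hb | hb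
    · have := ih hb
      have hxb : G.dist x k ≤ G.dist b k + 1 := by
        have := tri hT x b k
        have := adj_dist hT hadj
        omega
      simp only [Walk.length_cons]; omega
    · obtain ⟨rfl, rfl⟩ := cross hT h hadj hx hb
      have := dist_le q'
      have hxx : G.dist x x = 0 := by simp
      simp only [Walk.length_cons]; omega

lemma edge_gate {k a x z : V} (h : G.Adj k a)
    (hx : G.dist x a = G.dist x k + 1) (hz : G.dist z k = G.dist z a + 1) :
    G.dist x z = G.dist x k + 1 + G.dist a z := by
  refine le_antisymm ?_ ?_
  · have t1 := tri hT x k z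
    have t2 := tri hT k a z
    have := adj_dist hT h
    omega
  · have := edge_gate_aux hT h (pth hT x z) hx hz
    rw [length_pth hT] at this
    exact this

/-- the neighbor of `x` in the direction of `y` -/
noncomputable def nbr (x y : V) : V := (pth hT x y).getVert 1

lemma adj_nbr {x y : V} (hxy : x ≠ y) : G.Adj x (nbr hT x y) := by
  have hl : 0 < (pth hT x y).length := by
    rw [length_pth hT]; exact dist_pos_of_ne hT hxy
  have := (pth hT x y).adj_getVert_succ hl
  rwa [Walk.getVert_zero] at this

lemma nbr_mem {x y : V} (hxy : x ≠ y) : nbr hT x y ∈ (pth hT x y).support := by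
  rw [Walk.mem_support_iff_exists_getVert]
  exact ⟨1, rfl, by rw [length_pth hT]; exact dist_pos_of_ne hT hxy⟩

lemma eq_nbr {x k c : V} (hxk : x ≠ k) (hc : G.Adj k c)
    (hcd : G.dist x k = G.dist x c + 1) : c = nbr hT k x := by
  have hkc : G.dist k c = 1 := adj_dist hT hc
  have hcmem : c ∈ (pth hT k x).support := by
    apply mem_pth_of_dist hT
    have h1 : G.dist c x = G.dist x c := dist_comm
    have h2 : G.dist k x = G.dist x k := dist_comm
    omega
  have hnmem := nbr_mem hT (fun h => hxk h.symm : k ≠ x)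
  have hdn : G.dist k (nbr hT k x) = 1 := adj_dist hT (adj_nbr hT (fun h => hxk h.symm))
  exact path_inj hT (pth_isPath hT k x) hcmem hnmem (by omega)

lemma side_of_ne_nbr {x k c : V} (hxk : x ≠ k) (hc : G.Adj k c)
    (hne : c ≠ nbr hT k x) : G.dist x c = G.dist x k + 1 := by
  rcases side_total hT hc x with h' | h'
  · exact h'
  · exact absurd (eq_nbr hT hxk hc h') hne


section WithDeg
variable [Fintype V] [DecidableRel G.Adj]

/-- there is a leaf `l` "beyond `u` from `v`" -/
lemma leaf_beyond {u v : V} (huv : u ≠ v) :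
    ∃ l, G.degree l = 1 ∧ G.dist v l = G.dist v u + G.dist u l := by
  classical
  set S : Finset V := Finset.univ.filter (fun x => G.dist v x = G.dist v u + G.dist u x) with hS
  have huS : u ∈ S := by simp [hS]
  obtain ⟨l, hlS, hmax⟩ := S.exists_max_image (fun x => G.dist v x) ⟨u, huS⟩
  have hlspec : G.dist v l = G.dist v u + G.dist u l := by
    simpa [hS] using hlS
  have hlv : l ≠ v := by
    intro h
    rw [h] at hlspec
    have h0 : G.dist v v = 0 := by simp
    have h1 : G.dist v u = 0 := by omega
    exact huv (dist_eq_zero hT h1).symm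
  refine ⟨l, ?_, hlspec⟩
  have hsub : G.neighborFinset l ⊆ {nbr hT l v} := by
    intro b hb
    rw [mem_neighborFinset] at hb
    by_cases hbn : b = nbr hT l v
    · simp [hbn]
    · exfalso
      have hvb : G.dist v b = G.dist v l + 1 := side_of_ne_nbr hT (fun h => hlv h.symm) hb hbn
      have hlb : G.dist l b = 1 := adj_dist hT hb
      have t1 : G.dist u b ≤ G.dist u l + G.dist l b := tri hT u l b
      have t2 : G.dist v b ≤ G.dist v u + G.dist u b := tri hT v u b
      have hbS : b ∈ S := by
        simp only [hS, Finset.mem_filter, Finset.mem_univ, true_and]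
        omega
      have := hmax b hbS
      omega
  have hmem : nbr hT l v ∈ G.neighborFinset l := by
    rw [mem_neighborFinset]; exact adj_nbr hT hlv
  rw [← card_neighborFinset_eq_degree,
    Finset.Subset.antisymm hsub (Finset.singleton_subset_iff.mpr hmem)]
  simp

section Leg
variable {l k : V} {p : G.Walk l k} (hp : p.IsPath) (hdeg : G.degree l = 1)
  (hint : ∀ u ∈ p.support, u ≠ l → u ≠ k → G.degree u = 2)
include hp hdeg hint

lemma leg_nbrs : ∀ u ∈ p.support, u ≠ k → ∀ w, G.Adj u w → w ∈ p.support := by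
  intro u hu hunk w hw
  -- successor
  have hdropne : (p.dropUntil u hu).length ≠ 0 := fun h0 => hunk (Walk.eq_of_length_eq_zero h0)
  set s := (p.dropUntil u hu).getVert 1 with hs
  have hads : G.Adj u s := by
    have := (p.dropUntil u hu).adj_getVert_succ (Nat.pos_of_ne_zero hdropne)
    rwa [Walk.getVert_zero] at this
  have hsmem : s ∈ (p.dropUntil u hu).support := by
    rw [Walk.mem_support_iff_exists_getVert]
    exact ⟨1, rfl, Nat.pos_of_ne_zero hdropne⟩
  have hsp : s ∈ p.support := p.support_dropUntil_subset hu hsmem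
  by_cases hul : u = l
  · subst hul
    have hmem : s ∈ G.neighborFinset u := by rw [mem_neighborFinset]; exact hads
    have hcard : G.degree u = 1 := hdeg
    rw [← card_neighborFinset_eq_degree] at hcard
    have heq : ({s} : Finset V) = G.neighborFinset u :=
      Finset.eq_of_subset_of_card_le (Finset.singleton_subset_iff.mpr hmem) (by simp [hcard])
    have : w ∈ ({s} : Finset V) := by rw [heq, mem_neighborFinset]; exact hw
    rw [Finset.mem_singleton] at this
    exact this ▸ hsp
  · -- predecessor
    have htakene : (p.takeUntil u hu).length ≠ 0 := fun h0 =>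
      hul (Walk.eq_of_length_eq_zero h0).symm
    set t := (p.takeUntil u hu).reverse.getVert 1 with ht
    have hadt : G.Adj u t := by
      have : 0 < (p.takeUntil u hu).reverse.length := by
        rw [Walk.length_reverse]; exact Nat.pos_of_ne_zero htakene
      have := (p.takeUntil u hu).reverse.adj_getVert_succ this
      rwa [Walk.getVert_zero] at this
    have htmem : t ∈ (p.takeUntil u hu).support := by
      have : t ∈ (p.takeUntil u hu).reverse.support := by
        rw [Walk.mem_support_iff_exists_getVert]
        exact ⟨1, rfl, by rw [Walk.length_reverse]; exact Nat.pos_of_ne_zero htakene⟩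
      rwa [Walk.support_reverse, List.mem_reverse] at this
    have htp : t ∈ p.support := p.support_takeUntil_subset hu htmem
    have hts : t ≠ s := by
      intro hts
      have hnd := (isPath_def _).mp hp
      rw [← p.take_spec hu, Walk.support_append] at hnd
      have hdisj := (List.nodup_append'.mp hnd).2.2
      refine hdisj htmem ?_
      have : s ∈ (p.dropUntil u hu).support.tail := by
        have hcons := (p.dropUntil u hu).support_eq_cons
        have hsne : s ≠ u := hads.ne'
        rcases List.mem_cons.mp (hcons ▸ hsmem) with h | h
        · exact absurd h hsne
        · exact h
      exact hts ▸ this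
    have hcard : G.degree u = 2 := hint u hu hul hunk
    rw [← card_neighborFinset_eq_degree] at hcard
    have hsub : ({t, s} : Finset V) ⊆ G.neighborFinset u := by
      intro z hz
      rw [Finset.mem_insert, Finset.mem_singleton] at hz
      rw [mem_neighborFinset]
      rcases hz with rfl | rfl
      · exact hadt
      · exact hads
    have heq : ({t, s} : Finset V) = G.neighborFinset u :=
      Finset.eq_of_subset_of_card_le hsub (by rw [hcard, Finset.card_insert_of_notMem (by simp [hts]), Finset.card_singleton])
    have : w ∈ ({t, s} : Finset V) := by rw [heq, mem_neighborFinset]; exact hw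
    rw [Finset.mem_insert, Finset.mem_singleton] at this
    rcases this with rfl | rfl
    · exact htp
    · exact hsp

lemma gate_mem : ∀ {x m : V} (q : G.Walk x m), x ∈ p.support → m ∉ p.support →
    k ∈ q.support := by
  intro x m q
  induction q with
  | nil => intro h1 h2; exact absurd h1 h2
  | @cons x b m hadj q' ih =>
    intro h1 h2
    by_cases hb : b ∈ p.support
    · rw [Walk.support_cons]
      exact List.mem_cons_of_mem _ (ih hb h2)
    · by_cases hxk : x = k
      · rw [Walk.support_cons, hxk]; exact List.mem_cons_self
      · exact absurd (leg_nbrs hT hp hdeg hint x h1 hxk b hadj) hb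

lemma gate_dist {x m : V} (hx : x ∈ p.support) (hm : m ∉ p.support) :
    G.dist x m = G.dist x k + G.dist k m := by
  have hk : k ∈ (pth hT x m).support := gate_mem hT hp hdeg hint (pth hT x m) hx hm
  exact (split hT (pth_isPath hT x m) hk).symm

end Leg
end WithDeg


section Kappa
variable [Fintype V] [DecidableRel G.Adj] (hM : ∃ v : V, 3 ≤ G.degree v)
include hM

lemma exists_kappa (l : V) :
    ∃ k, 3 ≤ G.degree k ∧ ∀ m, 3 ≤ G.degree m → G.dist l k ≤ G.dist l m := by
  classical
  obtain ⟨v0, hv0⟩ := hM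
  obtain ⟨k, hk, hmin⟩ := (Finset.univ.filter (fun v => 3 ≤ G.degree v)).exists_min_image
    (fun m => G.dist l m) ⟨v0, by simp [hv0]⟩
  refine ⟨k, by simpa using hk, fun m hm => hmin m (by simp [hm])⟩

/-- the nearest major node to `l` -/
noncomputable def kappa (l : V) : V := (exists_kappa hT hM l).choose

lemma kappa_deg (l : V) : 3 ≤ G.degree (kappa hT hM l) := (exists_kappa hT hM l).choose_spec.1

lemma kappa_min (l : V) {m : V} (hm : 3 ≤ G.degree m) :
    G.dist l (kappa hT hM l) ≤ G.dist l m := (exists_kappa hT hM l).choose_spec.2 m hm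

omit hM
lemma path_two_le_degree {x y u : V} {p : G.Walk x y} (hp : p.IsPath)
    (hu : u ∈ p.support) (hux : u ≠ x) (huy : u ≠ y) : 2 ≤ G.degree u := by
  have hdropne : (p.dropUntil u hu).length ≠ 0 := fun h0 => huy (Walk.eq_of_length_eq_zero h0)
  set s := (p.dropUntil u hu).getVert 1 with hs
  have hads : G.Adj u s := by
    have := (p.dropUntil u hu).adj_getVert_succ (Nat.pos_of_ne_zero hdropne)
    rwa [Walk.getVert_zero] at this
  have hsmem : s ∈ (p.dropUntil u hu).support := by
    rw [Walk.mem_support_iff_exists_getVert]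
    exact ⟨1, rfl, Nat.pos_of_ne_zero hdropne⟩
  have htakene : (p.takeUntil u hu).length ≠ 0 := fun h0 =>
    hux (Walk.eq_of_length_eq_zero h0).symm
  set t := (p.takeUntil u hu).reverse.getVert 1 with ht
  have hadt : G.Adj u t := by
    have h0 : 0 < (p.takeUntil u hu).reverse.length := by
      rw [Walk.length_reverse]; exact Nat.pos_of_ne_zero htakene
    have := (p.takeUntil u hu).reverse.adj_getVert_succ h0
    rwa [Walk.getVert_zero] at this
  have htmem : t ∈ (p.takeUntil u hu).support := by
    have : t ∈ (p.takeUntil u hu).reverse.support := by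
      rw [Walk.mem_support_iff_exists_getVert]
      exact ⟨1, rfl, by rw [Walk.length_reverse]; exact Nat.pos_of_ne_zero htakene⟩
    rwa [Walk.support_reverse, List.mem_reverse] at this
  have hts : t ≠ s := by
    intro hts
    have hnd := (isPath_def _).mp hp
    rw [← p.take_spec hu, Walk.support_append] at hnd
    have hdisj := (List.nodup_append'.mp hnd).2.2
    refine hdisj htmem ?_
    have : s ∈ (p.dropUntil u hu).support.tail := by
      have hcons := (p.dropUntil u hu).support_eq_cons
      rcases List.mem_cons.mp (hcons ▸ hsmem) with h | h
      · exact absurd h hads.ne'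
      · exact h
    exact hts ▸ this
  have hsub : ({t, s} : Finset V) ⊆ G.neighborFinset u := by
    intro z hz
    rw [Finset.mem_insert, Finset.mem_singleton] at hz
    rw [mem_neighborFinset]
    rcases hz with rfl | rfl
    · exact hadt
    · exact hads
  calc 2 = ({t, s} : Finset V).card := by
        rw [Finset.card_insert_of_notMem (by simp [hts]), Finset.card_singleton]
    _ ≤ (G.neighborFinset u).card := Finset.card_le_card hsub
    _ = G.degree u := card_neighborFinset_eq_degree ..
include hM

/-- the leg of a leaf: canonical path to its nearest major node -/
noncomputable def leg (l : V) : G.Walk l (kappa hT hM l) := pth hT l (kappa hT hM l)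

variable {l : V} (hl : G.degree l = 1)
include hl

lemma leg_ne : l ≠ kappa hT hM l := by
  intro h
  have := kappa_deg hT hM l
  rw [← h] at this
  omega

lemma leg_int : ∀ u ∈ (leg hT hM l).support, u ≠ l → u ≠ kappa hT hM l → G.degree u = 2 := by
  intro u hu hul huk
  have h2 : 2 ≤ G.degree u := path_two_le_degree hT (pth_isPath hT _ _) hu hul huk
  by_contra hne
  have h3 : 3 ≤ G.degree u := by omega
  have hmin := kappa_min hT hM l h3
  have hsplit := split hT (pth_isPath hT l (kappa hT hM l)) hu
  have hpos : 0 < G.dist u (kappa hT hM l) := dist_pos_of_ne hT huk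
  omega

lemma leg_gate {x m : V} (hx : x ∈ (leg hT hM l).support) (hm : m ∉ (leg hT hM l).support) :
    G.dist x m = G.dist x (kappa hT hM l) + G.dist (kappa hT hM l) m :=
  gate_dist hT (pth_isPath hT _ _) hl (leg_int hT hM hl) hx hm

/-- the only leaf on a leg is the leaf itself -/
lemma leg_leaf_eq {l' : V} (hl' : G.degree l' = 1) (h : l' ∈ (leg hT hM l).support) : l' = l := by
  by_cases h1 : l' = l
  · exact h1
  by_cases h2 : l' = kappa hT hM l
  · exfalso; have := kappa_deg hT hM l; rw [← h2] at this; omega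
  · have := leg_int hT hM hl l' h h1 h2; omega

/-- a leg's major node is an exterior major node -/
lemma kappa_isExtMajor : IsExtMajor G (kappa hT hM l) := by
  refine ⟨kappa_deg hT hM l, l, (leg hT hM l).reverse, hl, (pth_isPath hT _ _).reverse, ?_⟩
  intro u hu huk hul
  rw [Walk.support_reverse, List.mem_reverse] at hu
  exact leg_int hT hM hl u hu hul huk

omit hl in
/-- κ of the witness leaf of an exterior major node is that node -/
lemma kappa_of_extMajor {k : V} (hk3 : 3 ≤ G.degree k) {l' : V} (p : G.Walk k l')
    (hl' : G.degree l' = 1) (hp : p.IsPath)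
    (hint : ∀ u ∈ p.support, u ≠ k → u ≠ l' → G.degree u = 2) : kappa hT hM l' = k := by
  have hrint : ∀ u ∈ p.reverse.support, u ≠ l' → u ≠ k → G.degree u = 2 := by
    intro u hu h1 h2
    rw [Walk.support_reverse, List.mem_reverse] at hu
    exact hint u hu h2 h1
  by_cases hmem : kappa hT hM l' ∈ p.reverse.support
  · rw [Walk.support_reverse, List.mem_reverse] at hmem
    by_cases e1 : kappa hT hM l' = k
    · exact e1
    by_cases e2 : kappa hT hM l' = l'
    · exfalso; have h3 := kappa_deg hT hM l'; rw [e2] at h3; omega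
    · exfalso; have h2 := hint _ hmem e1 e2; have h3 := kappa_deg hT hM l'; omega
  · exfalso
    have hgd := gate_dist hT hp.reverse hl' hrint (Walk.start_mem_support _) hmem
    have hmin := kappa_min hT hM l' hk3
    have hne : k ≠ kappa hT hM l' := fun h => hmem (h ▸ Walk.end_mem_support _)
    have hpos : 0 < G.dist k (kappa hT hM l') := dist_pos_of_ne hT hne
    omega

/-- legs of distinct leaves are disjoint (away from their major nodes) -/
lemma leg_disj {l₂ u : V} (hl₂ : G.degree l₂ = 1) (hne : l ≠ l₂)
    (h1 : u ∈ (leg hT hM l).support) (h1k : u ≠ kappa hT hM l)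
    (h2 : u ∈ (leg hT hM l₂).support) (h2k : u ≠ kappa hT hM l₂) : False := by
  have hl₂notin : l₂ ∉ (leg hT hM l).support := fun h => hne (leg_leaf_eq hT hM hl hl₂ h).symm
  have hgate : G.dist u l₂ = G.dist u (kappa hT hM l) + G.dist (kappa hT hM l) l₂ :=
    leg_gate hT hM hl h1 hl₂notin
  -- κ l lies on the path from l₂ to u, which is inside leg l₂
  have hk1mem : kappa hT hM l ∈ (pth hT u l₂).support := by
    apply mem_pth_of_dist hT
    have c1 : G.dist u (kappa hT hM l) + G.dist (kappa hT hM l) l₂ = G.dist u l₂ := hgate.symm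
    omega
  have htake : (leg hT hM l₂).takeUntil u h2 = pth hT l₂ u :=
    eq_pth hT ((pth_isPath hT _ _).takeUntil h2)
  have hk1mem' : kappa hT hM l ∈ ((leg hT hM l₂).takeUntil u h2).support := by
    rw [htake]; exact mem_pth_symm hT hk1mem
  have hk1leg : kappa hT hM l ∈ (leg hT hM l₂).support :=
    (leg hT hM l₂).support_takeUntil_subset h2 hk1mem'
  have hkk : kappa hT hM l = kappa hT hM l₂ := by
    by_cases e2 : kappa hT hM l = l₂
    · exfalso; have h3 := kappa_deg hT hM l; rw [e2] at h3; omega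
    by_cases e3 : kappa hT hM l = kappa hT hM l₂
    · exact e3
    · exfalso
      have := leg_int hT hM hl₂ _ hk1leg e2 e3
      have := kappa_deg hT hM l
      omega
  have hs1 : G.dist l₂ (kappa hT hM l) + G.dist (kappa hT hM l) u = G.dist l₂ u := by
    have := split hT ((pth_isPath hT l₂ (kappa hT hM l₂)).takeUntil h2) hk1mem'
    exact this
  rw [hkk] at hs1
  have hs2 := split hT (pth_isPath hT l₂ (kappa hT hM l₂)) h2
  have hcm : G.dist (kappa hT hM l₂) u = G.dist u (kappa hT hM l₂) := dist_comm
  have hz : G.dist u (kappa hT hM l₂) = 0 := by omega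
  exact h2k (dist_eq_zero hT hz)


omit hl

/-- a leaf `x` cannot have every leaf of the branch `B(k,b)` be the designated excluded
leaf of its nearest major node -/
lemma noleaf (F : V → V) : ∀ n : ℕ, ∀ k b : V, {y | G.dist y k = G.dist y b + 1}.ncard < n →
    3 ≤ G.degree k → G.Adj k b →
    (∀ x, G.degree x = 1 → G.dist x k = G.dist x b + 1 →
      kappa hT hM x ≠ k ∧ x = F (kappa hT hM x)) →
    False := by
  intro n
  induction n with
  | zero => intro k b h; omega
  | succ n ih =>
    intro k b hcard hk3 hb hbad
    have hkb : k ≠ b := hb.ne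
    -- find a leaf in the branch
    obtain ⟨x, hxleaf, hxbey⟩ := leaf_beyond hT hb.ne'
    have hbx : G.dist b x = G.dist x b := dist_comm
    have hkx : G.dist k x = G.dist x k := dist_comm
    have hkb1 : G.dist k b = 1 := adj_dist hT hb
    have hxB : G.dist x k = G.dist x b + 1 := by omega
    obtain ⟨hxknot, hxF⟩ := hbad x hxleaf hxB
    set m := kappa hT hM x with hmdef
    have hm3 : 3 ≤ G.degree m := kappa_deg hT hM x
    have hxm : x ≠ m := by intro h; rw [← h] at hm3; omega
    -- k is not on the leg of x
    have hknotleg : k ∉ (leg hT hM x).support := by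
      intro hkleg
      by_cases e1 : k = x
      · rw [e1] at hk3; omega
      by_cases e2 : k = kappa hT hM x
      · exact hxknot (hmdef ▸ e2.symm)
      · have := leg_int hT hM hxleaf k hkleg e1 e2; omega
    have hgate : G.dist x k = G.dist x m + G.dist m k :=
      leg_gate hT hM hxleaf (Walk.start_mem_support _) hknotleg
    have hmk : m ≠ k := fun h => hxknot (hmdef ▸ h)
    have hmkpos : 0 < G.dist m k := dist_pos_of_ne hT hmk
    -- m is in the branch B(k,b)
    have hmB : G.dist m k = G.dist m b + 1 := by
      rcases side_total hT hb m with hside | hside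
      · -- m on the k-side : contradiction
        exfalso
        have := edge_gate hT hb hside hxB
        have hc1 : G.dist m x = G.dist x m := dist_comm
        have hc2 : G.dist b x = G.dist x b := dist_comm
        omega
      · exact hside
    -- pick a fresh neighbor of m
    have hcard2 : (({nbr hT m k, nbr hT m x} : Finset V)).card ≤ 2 :=
      Finset.card_insert_le _ _ |>.trans (by simp)
    have hnonempty : (G.neighborFinset m \ {nbr hT m k, nbr hT m x}).Nonempty := by
      rw [← Finset.card_pos]
      have h1 : (G.neighborFinset m).card ≤
          (G.neighborFinset m \ {nbr hT m k, nbr hT m x}).card +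
          ({nbr hT m k, nbr hT m x} : Finset V).card :=
        Finset.card_le_card_sdiff_add_card
      have h2 : (G.neighborFinset m).card = G.degree m := card_neighborFinset_eq_degree ..
      omega
    obtain ⟨a, ha⟩ := hnonempty
    rw [Finset.mem_sdiff, mem_neighborFinset, Finset.mem_insert, Finset.mem_singleton,
      not_or] at ha
    have hma := ha.1
    have hank := ha.2.1
    have hanx := ha.2.2
    -- k and x are on the m-side of the edge (m,a)
    have hkside : G.dist k a = G.dist k m + 1 := side_of_ne_nbr hT hmk.symm hma hank
    have hxside : G.dist x a = G.dist x m + 1 := side_of_ne_nbr hT hxm hma hanx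
    -- the a-side branch is strictly inside B(k,b)
    have hsub : {y | G.dist y m = G.dist y a + 1} ⊆
        {y | G.dist y k = G.dist y b + 1} \ {m} := by
      intro y hy
      simp only [Set.mem_setOf_eq] at hy
      constructor
      · simp only [Set.mem_setOf_eq]
        have hky : G.dist k y = G.dist k m + 1 + G.dist a y := edge_gate hT hma hkside hy
        have htr : G.dist y b ≤ G.dist y m + G.dist m b := tri hT y m b
        have hc1 : G.dist k y = G.dist y k := dist_comm
        have hc2 : G.dist a y = G.dist y a := dist_comm
        have hc3 : G.dist m y = G.dist y m := dist_comm
        have hc4 : G.dist k m = G.dist m k := dist_comm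
        have htr2 : G.dist y k ≤ G.dist y b + 1 := by
          have := tri hT y b k
          have : G.dist b k = 1 := adj_dist hT hb.symm
          omega
        omega
      · simp only [Set.mem_singleton_iff]
        intro h
        rw [h] at hy
        have h0 : G.dist m m = 0 := by simp
        have h1 : G.dist m a = 1 := adj_dist hT hma
        omega
    have hmem : m ∈ {y | G.dist y k = G.dist y b + 1} := hmB
    have hfin : ({y | G.dist y k = G.dist y b + 1} : Set V).Finite := Set.toFinite _
    have hlt : ({y | G.dist y m = G.dist y a + 1} : Set V).ncard <
        ({y | G.dist y k = G.dist y b + 1} : Set V).ncard := by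
      calc ({y | G.dist y m = G.dist y a + 1} : Set V).ncard
          ≤ (({y | G.dist y k = G.dist y b + 1} \ {m}) : Set V).ncard :=
            Set.ncard_le_ncard hsub (Set.toFinite _)
        _ < ({y | G.dist y k = G.dist y b + 1} : Set V).ncard := by
            rw [Set.ncard_diff_singleton_of_mem hmem]
            have : 0 < ({y | G.dist y k = G.dist y b + 1} : Set V).ncard :=
              (Set.ncard_pos hfin).mpr ⟨m, hmem⟩
            omega
    refine ih m a (by omega) hm3 hma ?_
    intro y hyleaf hyBa
    have hyB := hsub hyBa
    obtain ⟨hyknot, hyF⟩ := hbad y hyleaf hyB.1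
    refine ⟨?_, hyF⟩
    intro hym
    -- then y = F m = x, but x is on the m-side
    have hyx : y = x := by rw [hyF, hym]; exact hxF.symm
    rw [hyx] at hyBa
    omega


lemma inner_case (F : V → V) {u v k : V}
    (hFspec : ∀ k', IsExtMajor G k' → G.degree (F k') = 1 ∧ kappa hT hM (F k') = k')
    (hexcl : ∀ x, G.degree x = 1 → G.dist u x ≠ G.dist v x → x = F (kappa hT hM x))
    (hkK : IsExtMajor G k) (hst : G.dist u k < G.dist v k) : False := by
  have hk3 : 3 ≤ G.degree k := hkK.1
  obtain ⟨hFkleaf, hFkk⟩ := hFspec k hkK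
  have hvk : v ≠ k := by
    intro h
    rw [h] at hst
    have h0 : G.dist k k = 0 := by rw [SimpleGraph.dist_self]
    omega
  have hFkk' : F k ≠ k := by
    intro h; rw [h] at hFkleaf; omega
  -- pick a neighbor of k away from v and from F k
  have hnonempty : (G.neighborFinset k \ {nbr hT k v, nbr hT k (F k)}).Nonempty := by
    rw [← Finset.card_pos]
    have h1 : (G.neighborFinset k).card ≤
        (G.neighborFinset k \ {nbr hT k v, nbr hT k (F k)}).card +
        ({nbr hT k v, nbr hT k (F k)} : Finset V).card :=
      Finset.card_le_card_sdiff_add_card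
    have h2 : (G.neighborFinset k).card = G.degree k := card_neighborFinset_eq_degree ..
    have h3 : (({nbr hT k v, nbr hT k (F k)} : Finset V)).card ≤ 2 :=
      Finset.card_insert_le _ _ |>.trans (by simp)
    omega
  obtain ⟨c, hc⟩ := hnonempty
  rw [Finset.mem_sdiff, mem_neighborFinset, Finset.mem_insert, Finset.mem_singleton,
    not_or] at hc
  have hkc := hc.1
  have hcnv := hc.2.1
  have hcnF := hc.2.2
  have hvc : G.dist v c = G.dist v k + 1 := side_of_ne_nbr hT hvk hkc hcnv
  have hFc : G.dist (F k) c = G.dist (F k) k + 1 := side_of_ne_nbr hT hFkk' hkc hcnF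
  refine noleaf hT hM F ({y | G.dist y k = G.dist y c + 1}.ncard + 1) k c (by omega) hk3 hkc ?_
  intro x hxleaf hxB
  have hkk0 : G.dist k k = 0 := by simp
  have hkc1 : G.dist k c = 1 := adj_dist hT hkc
  have hkx : G.dist k x = G.dist k k + 1 + G.dist c x := edge_gate hT hkc (by omega) hxB
  have hvx : G.dist v x = G.dist v k + 1 + G.dist c x := edge_gate hT hkc hvc hxB
  have hux : G.dist u x ≤ G.dist u k + G.dist k x := tri hT u k x
  have hD : G.dist u x ≠ G.dist v x := by omega
  have hxF := hexcl x hxleaf hD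
  refine ⟨?_, hxF⟩
  intro hxk
  rw [hxk] at hxF
  rw [hxF] at hxB
  omega


lemma half {u v : V}
    (hIN : ∀ k, IsExtMajor G k → G.dist u k ≠ G.dist v k → False) (huv : u ≠ v) :
    ∃ z, G.degree z = 1 ∧ G.dist u z < G.dist v z ∧
      G.dist v z = G.dist v u + G.dist u z ∧ u ∈ (leg hT hM z).support ∧
      v ∉ (leg hT hM z).support ∧
      G.dist u (kappa hT hM z) = G.dist v (kappa hT hM z) := by
  obtain ⟨z, hzleaf, hzbey⟩ := leaf_beyond hT huv
  have hvupos : 0 < G.dist v u := dist_pos_of_ne hT (Ne.symm huv)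
  have hDz : G.dist u z < G.dist v z := by omega
  have hkK := kappa_isExtMajor hT hM hzleaf
  by_cases hv : v ∈ (leg hT hM z).support
  · exfalso
    have hupth : u ∈ (pth hT v z).support := mem_pth_of_dist hT (by omega)
    have htake : (leg hT hM z).takeUntil v hv = pth hT z v :=
      eq_pth hT ((pth_isPath hT _ _).takeUntil hv)
    have hu : u ∈ (leg hT hM z).support := by
      have h2 : u ∈ (pth hT z v).support := mem_pth_symm hT hupth
      rw [← htake] at h2
      exact (leg hT hM z).support_takeUntil_subset hv h2
    have h1 := split hT (pth_isPath hT z (kappa hT hM z)) hu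
    have h2 := split hT (pth_isPath hT z (kappa hT hM z)) hv
    refine hIN _ hkK ?_
    intro heq
    have hc1 : G.dist z u = G.dist u z := dist_comm
    have hc2 : G.dist z v = G.dist v z := dist_comm
    omega
  · by_cases hu : u ∈ (leg hT hM z).support
    · by_cases heq : G.dist u (kappa hT hM z) = G.dist v (kappa hT hM z)
      · exact ⟨z, hzleaf, hDz, hzbey, hu, hv, heq⟩
      · exact (hIN _ hkK heq).elim
    · exfalso
      have hgu := leg_gate hT hM hzleaf (Walk.start_mem_support _) hu
      have hgv := leg_gate hT hM hzleaf (Walk.start_mem_support _) hv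
      refine hIN _ hkK ?_
      intro heq
      have hc1 : G.dist z u = G.dist u z := dist_comm
      have hc2 : G.dist z v = G.dist v z := dist_comm
      have hc3 : G.dist (kappa hT hM z) u = G.dist u (kappa hT hM z) := dist_comm
      have hc4 : G.dist (kappa hT hM z) v = G.dist v (kappa hT hM z) := dist_comm
      omega

lemma resolving (F : V → V)
    (hFspec : ∀ k', IsExtMajor G k' → G.degree (F k') = 1 ∧ kappa hT hM (F k') = k') :
    IsResolvingSet G {x | G.degree x = 1 ∧ x ≠ F (kappa hT hM x)} := by
  intro u v huv
  by_contra hcon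
  push_neg at hcon
  have hexcl : ∀ x, G.degree x = 1 → G.dist u x ≠ G.dist v x → x = F (kappa hT hM x) := by
    intro x hx hD
    by_contra hne
    exact hD (hcon x ⟨hx, hne⟩)
  have hexcl' : ∀ x, G.degree x = 1 → G.dist v x ≠ G.dist u x → x = F (kappa hT hM x) :=
    fun x hx hD => hexcl x hx (Ne.symm hD)
  have hIN : ∀ k, IsExtMajor G k → G.dist u k ≠ G.dist v k → False := by
    intro k hk hne
    rcases Nat.lt_or_ge (G.dist u k) (G.dist v k) with h | h
    · exact inner_case hT hM F hFspec hexcl hk h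
    · have h' : G.dist v k < G.dist u k := by omega
      exact inner_case hT hM F hFspec hexcl' hk h'
  have hIN' : ∀ k, IsExtMajor G k → G.dist v k ≠ G.dist u k → False :=
    fun k hk hne => hIN k hk (Ne.symm hne)
  obtain ⟨z, hzl, hzlt, hzbey, huz, hvz, hzeq⟩ := half hT hM hIN huv
  obtain ⟨z', hzl', hzlt', hzbey', hvz'in, huz'out, hzeq'⟩ := half hT hM hIN' (Ne.symm huv)
  -- kernel
  have huv_d : G.dist u v = G.dist u (kappa hT hM z) + G.dist (kappa hT hM z) v :=
    leg_gate hT hM hzl huz hvz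
  have hvu_d : G.dist v u = G.dist v (kappa hT hM z') + G.dist (kappa hT hM z') u :=
    leg_gate hT hM hzl' hvz'in huz'out
  have hcomm : G.dist u v = G.dist v u := dist_comm
  have hc1 : G.dist (kappa hT hM z) v = G.dist v (kappa hT hM z) := dist_comm
  have hc2 : G.dist (kappa hT hM z') u = G.dist u (kappa hT hM z') := dist_comm
  have hdeq : G.dist u (kappa hT hM z) = G.dist u (kappa hT hM z') := by omega
  have hk_mem : kappa hT hM z ∈ (pth hT u v).support := mem_pth_of_dist hT (by omega)
  have hk'_mem : kappa hT hM z' ∈ (pth hT u v).support := by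
    refine mem_pth_symm hT (mem_pth_of_dist hT ?_)
    omega
  have hkk' : kappa hT hM z = kappa hT hM z' :=
    path_inj hT (pth_isPath hT u v) hk_mem hk'_mem hdeq
  have hzz' : z ≠ z' := by
    intro h
    rw [h] at hzlt
    omega
  have hzF := hexcl z hzl (by omega)
  have hz'F := hexcl z' hzl' (by omega)
  exact hzz' (by rw [hzF, hz'F, hkk'])



lemma leg_eq_pth (l : V) : leg hT hM l = pth hT l (kappa hT hM l) := rfl

lemma lower_bound {R : Set V} (hR : IsResolvingSet G R) :
    {x : V | G.degree x = 1}.ncard ≤ {x : V | IsExtMajor G x}.ncard + R.ncard := by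
  classical
  set B : Set V := {l | G.degree l = 1 ∧
    ∀ x ∈ R, ¬(x ∈ (leg hT hM l).support ∧ x ≠ kappa hT hM l)} with hB
  have hBsub : B ⊆ {x : V | G.degree x = 1} := fun l hl => hl.1
  have hinj : Set.InjOn (kappa hT hM) B := by
    intro l₁ h₁ l₂ h₂ hkk
    by_contra hne
    have hl₁ : G.degree l₁ = 1 := h₁.1
    have hl₂ : G.degree l₂ = 1 := h₂.1
    have hkl₁ : kappa hT hM l₁ ≠ l₁ := Ne.symm (leg_ne hT hM hl₁)
    have hkl₂ : kappa hT hM l₂ ≠ l₂ := Ne.symm (leg_ne hT hM hl₂)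
    set a₁ := nbr hT (kappa hT hM l₁) l₁ with ha₁def
    set a₂ := nbr hT (kappa hT hM l₂) l₂ with ha₂def
    have hadj₁ : G.Adj (kappa hT hM l₁) a₁ := adj_nbr hT hkl₁
    have hadj₂ : G.Adj (kappa hT hM l₂) a₂ := adj_nbr hT hkl₂
    have ha₁leg : a₁ ∈ (leg hT hM l₁).support := by
      rw [leg_eq_pth]; exact mem_pth_symm hT (nbr_mem hT hkl₁)
    have ha₂leg : a₂ ∈ (leg hT hM l₂).support := by
      rw [leg_eq_pth]; exact mem_pth_symm hT (nbr_mem hT hkl₂)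
    have ha₁k : a₁ ≠ kappa hT hM l₁ := hadj₁.ne'
    have ha₂k : a₂ ≠ kappa hT hM l₂ := hadj₂.ne'
    have hane : a₁ ≠ a₂ := by
      intro h
      refine leg_disj hT hM hl₁ hl₂ hne ha₁leg ha₁k ?_ ?_
      · rw [h]; exact ha₂leg
      · rw [h]; exact ha₂k
    obtain ⟨w, hwR, hwd⟩ := hR a₁ a₂ hane
    have hw₁ : G.dist a₁ w = 1 + G.dist (kappa hT hM l₁) w := by
      have h1 : G.dist a₁ (kappa hT hM l₁) = 1 := adj_dist hT hadj₁.symm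
      by_cases hmem : w ∈ (leg hT hM l₁).support
      · have hwk : w = kappa hT hM l₁ := by
          by_contra hwk; exact h₁.2 w hwR ⟨hmem, hwk⟩
        rw [hwk]
        have h0 : G.dist (kappa hT hM l₁) (kappa hT hM l₁) = 0 := by
          rw [SimpleGraph.dist_self]
        omega
      · have := leg_gate hT hM hl₁ ha₁leg hmem
        omega
    have hw₂ : G.dist a₂ w = 1 + G.dist (kappa hT hM l₂) w := by
      have h1 : G.dist a₂ (kappa hT hM l₂) = 1 := adj_dist hT hadj₂.symm
      by_cases hmem : w ∈ (leg hT hM l₂).support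
      · have hwk : w = kappa hT hM l₂ := by
          by_contra hwk; exact h₂.2 w hwR ⟨hmem, hwk⟩
        rw [hwk]
        have h0 : G.dist (kappa hT hM l₂) (kappa hT hM l₂) = 0 := by
          rw [SimpleGraph.dist_self]
        omega
      · have := leg_gate hT hM hl₂ ha₂leg hmem
        omega
    rw [hkk] at hw₁
    exact hwd (by omega)
  have h2 : B.ncard ≤ {x : V | IsExtMajor G x}.ncard :=
    Set.ncard_le_ncard_of_injOn (kappa hT hM)
      (fun l hl => kappa_isExtMajor hT hM hl.1) hinj (Set.toFinite _)
  have hex : ∀ l ∈ {x : V | G.degree x = 1} \ B,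
      ∃ x, x ∈ R ∧ x ∈ (leg hT hM l).support ∧ x ≠ kappa hT hM l := by
    intro l hl
    obtain ⟨hlL, hlB⟩ := hl
    by_contra hcon
    push_neg at hcon
    refine hlB ⟨hlL, ?_⟩
    intro x hxR hx
    exact hx.2 (hcon x hxR hx.1)
  set g : V → V := fun l =>
    if h : ∃ x, x ∈ R ∧ x ∈ (leg hT hM l).support ∧ x ≠ kappa hT hM l then h.choose else l
    with hgdef
  have hgspec : ∀ l ∈ {x : V | G.degree x = 1} \ B,
      g l ∈ R ∧ g l ∈ (leg hT hM l).support ∧ g l ≠ kappa hT hM l := by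
    intro l hl
    have h := hex l hl
    simp only [hgdef, dif_pos h]
    exact h.choose_spec
  have h3 : ({x : V | G.degree x = 1} \ B).ncard ≤ R.ncard := by
    refine Set.ncard_le_ncard_of_injOn g (fun l hl => (hgspec l hl).1) ?_ (Set.toFinite _)
    intro l₁ h₁ l₂ h₂ hgeq
    by_contra hne
    obtain ⟨hr₁, hs₁, hk₁⟩ := hgspec l₁ h₁
    obtain ⟨hr₂, hs₂, hk₂⟩ := hgspec l₂ h₂
    exact leg_disj hT hM h₁.1 h₂.1 hne hs₁ hk₁ (by rw [hgeq]; exact hs₂)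
      (by rw [hgeq]; exact hk₂)
  have hsplit := Set.ncard_diff_add_ncard_of_subset hBsub (Set.toFinite _)
  omega

end Kappa
end TreeBasics
end TreeMD


/-- If `T` is a tree that is not a path graph, then its metric dimension equals
`|L(T)| - |K(T)|`, the number of leaves minus the number of exterior major nodes. -/
theorem metricDim_of_tree_not_path {V : Type*} [Fintype V] (G : SimpleGraph V)
    [DecidableRel G.Adj] (hT : G.IsTree) (hnp : ¬ IsPathGraph G) :
    metricDim G = Nat.card {v : V // IsLeafVx G v} - Nat.card {v : V // IsExtMajor G v} := by
  classical
  have hM : ∃ v : V, 3 ≤ G.degree v := by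
    rw [IsPathGraph, not_and] at hnp
    have h := hnp hT
    push_neg at h
    obtain ⟨v, hv⟩ := h
    exact ⟨v, by omega⟩
  have hKsur : ∀ k, IsExtMajor G k → ∃ l, G.degree l = 1 ∧ TreeMD.kappa hT hM l = k := by
    intro k hk
    obtain ⟨hk3, l, p, hl, hp, hint⟩ := hk
    exact ⟨l, hl, TreeMD.kappa_of_extMajor hT hM hk3 p hl hp hint⟩
  set F : V → V := fun k => if h : IsExtMajor G k then (hKsur k h).choose else k with hF
  have hFspec : ∀ k, IsExtMajor G k → G.degree (F k) = 1 ∧ TreeMD.kappa hT hM (F k) = k := by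
    intro k hk
    have hFk : F k = (hKsur k hk).choose := by
      simp only [hF]
      exact dif_pos hk
    rw [hFk]
    exact (hKsur k hk).choose_spec
  set R0 : Set V := {x | G.degree x = 1 ∧ x ≠ F (TreeMD.kappa hT hM x)} with hR0
  have hres : IsResolvingSet G R0 := TreeMD.resolving hT hM F hFspec
  have hR0eq : R0 = {x : V | G.degree x = 1} \ (F '' {x : V | IsExtMajor G x}) := by
    ext x
    constructor
    · rintro ⟨hx1, hx2⟩
      refine ⟨hx1, ?_⟩
      rintro ⟨k, hkK, hfk⟩
      have hk2 := (hFspec k hkK).2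
      apply hx2
      rw [← hfk, hk2]
    · rintro ⟨hx1, hx2⟩
      refine ⟨hx1, ?_⟩
      intro heq
      exact hx2 ⟨TreeMD.kappa hT hM x, TreeMD.kappa_isExtMajor hT hM hx1, heq.symm⟩
  have hFKL : F '' {x : V | IsExtMajor G x} ⊆ {x : V | G.degree x = 1} := by
    rintro y ⟨k, hkK, rfl⟩
    exact (hFspec k hkK).1
  have hFinj : Set.InjOn F {x : V | IsExtMajor G x} := by
    intro k₁ h₁ k₂ h₂ heq
    have e₁ := (hFspec k₁ h₁).2
    have e₂ := (hFspec k₂ h₂).2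
    rw [← e₁, heq, e₂]
  have hcardFK : (F '' {x : V | IsExtMajor G x}).ncard = {x : V | IsExtMajor G x}.ncard := Set.ncard_image_of_injOn hFinj
  have hcardR0 : R0.ncard = {x : V | G.degree x = 1}.ncard - {x : V | IsExtMajor G x}.ncard := by
    rw [hR0eq, Set.ncard_diff hFKL (Set.toFinite _), hcardFK]
  have hmem : {x : V | G.degree x = 1}.ncard - {x : V | IsExtMajor G x}.ncard ∈ {n : ℕ | ∃ R : Set V, IsResolvingSet G R ∧ R.ncard = n} :=
    ⟨R0, hres, hcardR0⟩
  have hub : metricDim G ≤ {x : V | G.degree x = 1}.ncard - {x : V | IsExtMajor G x}.ncard := Nat.sInf_le hmem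
  have hSne : {n : ℕ | ∃ R : Set V, IsResolvingSet G R ∧ R.ncard = n}.Nonempty := ⟨_, hmem⟩
  obtain ⟨R, hRres, hRcard⟩ := Nat.sInf_mem hSne
  have hlow := TreeMD.lower_bound hT hM hRres
  have hmd : metricDim G = R.ncard := hRcard.symm
  have hLK : Nat.card {v : V // IsLeafVx G v} = {x : V | G.degree x = 1}.ncard := Nat.card_coe_set_eq {x : V | G.degree x = 1}
  have hKK : Nat.card {v : V // IsExtMajor G v} = {x : V | IsExtMajor G x}.ncard := Nat.card_coe_set_eq {x : V | IsExtMajor G x}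
  rw [hLK, hKK]
  omega
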